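/- Let H be a P×K complex matrix and M ≤ min{P,K} an integer. There exist a K×M matrix F, an M×P matrix W, and an M×M strictly upper-triangular matrix B satisfying W·H·F = B + I if and only if rank(H) ≥ M. -/

import Mathlib

open Matrix

/-- Existence of a zero-forcing block decision feedback detector:
`W H F = B + I` with `B` strictly upper triangular is solvable iff `rank H ≥ M`. -/
theorem stmt4 (P K M : ℕ) (hMP : M ≤ P) (hMK : M ≤ K)
    (H : Matrix (Fin P) (Fin K) ℂ) :
    (∃ (F : Matrix (Fin K) (Fin M) ℂ) (W : Matrix (Fin M) (Fin P) ℂ)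
       (B : Matrix (Fin M) (Fin M) ℂ),
        (∀ i j : Fin M, j ≤ i → B i j = 0) ∧ W * H * F = B + 1) ↔
    M ≤ H.rank := by
  constructor
  · rintro ⟨F, W, B, hB, hEq⟩
    -- B + 1 is upper triangular with unit diagonal, hence invertible
    have hdet : (B + 1).det = 1 := by
      have htri : (B + 1).BlockTriangular id := by
        intro i j hij
        have hne : ¬ i = j := fun h => lt_irrefl (id i) (h ▸ hij)
        simp [hB i j hij.le, one_apply, hne]
      rw [Matrix.det_of_upperTriangular htri]
      refine Finset.prod_eq_one fun i _ => ?_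
      simp [hB i i le_rfl, one_apply]
    have hunit : IsUnit (B + 1) := by
      apply (Matrix.isUnit_iff_isUnit_det _).mpr
      rw [hdet]; exact isUnit_one
    have h1 : (W * H * F).rank = M := by
      rw [hEq, Matrix.rank_of_isUnit _ hunit, Fintype.card_fin]
    calc M = (W * H * F).rank := h1.symm
      _ ≤ (H * F).rank := by
          rw [Matrix.mul_assoc]; exact Matrix.rank_mul_le_right _ _
      _ ≤ H.rank := Matrix.rank_mul_le_left _ _
  · intro hrank
    set L := H.mulVecLin with hL
    obtain ⟨v, hv⟩ := exists_linearIndependent_of_le_finrank (R := ℂ)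
      (M := LinearMap.range L) (n := M) hrank
    choose u hu using fun i => (v i).2
    let b := Pi.basisFun ℂ (Fin M)
    let g : (Fin M → ℂ) →ₗ[ℂ] (Fin K → ℂ) := b.constr ℂ u
    have hcomp : L.comp g = b.constr ℂ (fun i => (v i : Fin P → ℂ)) := by
      apply b.ext
      intro i
      simp [g, Module.Basis.constr_basis, hu]
    have hker : LinearMap.ker (L.comp g) = ⊥ := by
      rw [hcomp, LinearMap.ker_eq_bot]
      intro x y hxy
      have hx : ∀ z : Fin M → ℂ, (b.constr ℂ (fun i => (v i : Fin P → ℂ))) z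
          = ∑ i, z i • (v i : Fin P → ℂ) := by
        intro z
        rw [Module.Basis.constr_apply_fintype]
        simp [b, Pi.basisFun_equivFun]
      have h0 : ∑ i, (x i - y i) • (v i : Fin P → ℂ) = 0 := by
        have := hxy
        rw [hx, hx] at this
        simp [sub_smul, Finset.sum_sub_distrib, this]
      have hvi : LinearIndependent ℂ (fun i => (v i : Fin P → ℂ)) := by
        exact hv.map' (LinearMap.range L).subtype (Submodule.ker_subtype _)
      have := Fintype.linearIndependent_iff.mp hvi _ h0
      funext i
      exact sub_eq_zero.mp (this i)
    obtain ⟨w, hw⟩ := (L.comp g).exists_leftInverse_of_injective hker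
    refine ⟨LinearMap.toMatrix' g, LinearMap.toMatrix' w, 0, fun i j _ => rfl, ?_⟩
    rw [zero_add]
    have : (LinearMap.toMatrix' w * H * LinearMap.toMatrix' g).mulVecLin
        = (1 : Matrix (Fin M) (Fin M) ℂ).mulVecLin := by
      rw [Matrix.mulVecLin_mul, Matrix.mulVecLin_mul, Matrix.mulVecLin_one]
      show (LinearMap.toMatrix' w).mulVecLin.comp
          (H.mulVecLin.comp (LinearMap.toMatrix' g).mulVecLin) = LinearMap.id
      rw [show (LinearMap.toMatrix' w).mulVecLin = w from Matrix.toLin'_toMatrix' w,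
        show (LinearMap.toMatrix' g).mulVecLin = g from Matrix.toLin'_toMatrix' g]
      exact hw
    exact Matrix.toLin'.injective this
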